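/- arXiv:1707.08044 — 2 statements merged into one kernel-verified Lean document; each statement's English description precedes it below -/
import Mathlib

section
/- Let H be a finite-dimensional unimodular ribbon Hopf algebra with right integral λ and R-matrix R = Σᵢ aᵢ ⊗ bᵢ satisfying (S⊗S)(R) = R. Then for all f ∈ H* and x ∈ H: Σ_{i,j} f(b_j a_i)·λ(S(a_j b_i)x) = f( Σ_{i,j} λ(S²(x) b_j a_i) · S⁻¹(a_j b_i) ). Equivalently, with φ_X(x) = λ(S²(x)·–) and ψ_X = S⁻¹∘ψ, one has (ψ_X ∘ φ_X)* = φ_X ∘ ψ_X as maps X* → X*. -/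
open TensorProduct
section Helpers
variable {R : Type*} {A : Type*} [CommSemiring R] [Semiring A] [HopfAlgebra R A]
open Coalgebra HopfAlgebra

lemma repr_sum_smul_counit {c : A} {ι : Type*} (r : Coalgebra.Repr R c ι) :
    ∑ i ∈ r.index, counit (R := R) (r.right i) • r.left i = c := by
  have := congrArg (TensorProduct.rid R A) (Coalgebra.sum_tmul_counit_eq r)
  simp only [map_sum, TensorProduct.rid_tmul, one_smul] at this
  exact this

lemma repr_sum_counit_smul {c : A} {ι : Type*} (r : Coalgebra.Repr R c ι) :
    ∑ i ∈ r.index, counit (R := R) (r.left i) • r.right i = c := by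
  have := congrArg (TensorProduct.lid R A) (Coalgebra.sum_counit_tmul_eq r)
  simp only [map_sum, TensorProduct.lid_tmul, one_smul] at this
  exact this

/-- A representation of `comul (c*d)` built from representations of `comul c` and `comul d`. -/
noncomputable def mulRepr {c d : A} {ι κ : Type*} (r : Coalgebra.Repr R c ι)
    (t : Coalgebra.Repr R d κ) :
    Coalgebra.Repr R (c * d) (ι × κ) where
  index := r.index ×ˢ t.index
  left := fun p => r.left p.1 * t.left p.2
  right := fun p => r.right p.1 * t.right p.2
  eq := by
    rw [Bialgebra.comul_mul, ← r.eq, ← t.eq, Finset.sum_mul_sum]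
    rw [Finset.sum_product]
    simp [Algebra.TensorProduct.tmul_mul_tmul]

@[simp] lemma mulRepr_index {c d : A} {ι κ : Type*} (r : Coalgebra.Repr R c ι) (t : Coalgebra.Repr R d κ) :
    (mulRepr r t).index = r.index ×ˢ t.index := rfl

@[simp] lemma mulRepr_left {c d : A} {ι κ : Type*} (r : Coalgebra.Repr R c ι) (t : Coalgebra.Repr R d κ)
    (p : ι × κ) : (mulRepr r t).left p = r.left p.1 * t.left p.2 := rfl

@[simp] lemma mulRepr_right {c d : A} {ι κ : Type*} (r : Coalgebra.Repr R c ι) (t : Coalgebra.Repr R d κ)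
    (p : ι × κ) : (mulRepr r t).right p = r.right p.1 * t.right p.2 := rfl

lemma triple_sum_eq (F G K : A →ₗ[R] A) {c : A} {ι κ Λ : Type*} (r : Coalgebra.Repr R c ι)
    (r1 : ∀ i : ι, Coalgebra.Repr R (r.left i) κ)
    (r2 : ∀ i : ι, Coalgebra.Repr R (r.right i) Λ) :
    ∑ i ∈ r.index, ∑ j ∈ (r1 i).index,
        F ((r1 i).left j) * (G ((r1 i).right j) * K (r.right i))
      = ∑ i ∈ r.index, ∑ j ∈ (r2 i).index,
        F (r.left i) * (G ((r2 i).left j) * K ((r2 i).right j)) := by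
  have h := Coalgebra.sum_tmul_tmul_eq r r1 r2
  have h2 := congrArg (LinearMap.mul' R A ∘ₗ
      TensorProduct.map F (LinearMap.mul' R A ∘ₗ TensorProduct.map G K)) h
  simpa [map_sum, TensorProduct.map_tmul, LinearMap.mul'_apply] using h2

lemma sum_swap4 {α β γ δ M : Type*} [AddCommMonoid M] (I : Finset α) (J : α → Finset β)
    (I' : Finset γ) (J' : γ → Finset δ) (t : α → β → γ → δ → M) :
    ∑ i ∈ I, ∑ j ∈ J i, ∑ p ∈ I', ∑ q ∈ J' p, t i j p q
      = ∑ p ∈ I', ∑ q ∈ J' p, ∑ i ∈ I, ∑ j ∈ J i, t i j p q := by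
  calc ∑ i ∈ I, ∑ j ∈ J i, ∑ p ∈ I', ∑ q ∈ J' p, t i j p q
      = ∑ i ∈ I, ∑ p ∈ I', ∑ j ∈ J i, ∑ q ∈ J' p, t i j p q :=
        Finset.sum_congr rfl fun i _ => Finset.sum_comm
    _ = ∑ p ∈ I', ∑ i ∈ I, ∑ j ∈ J i, ∑ q ∈ J' p, t i j p q := Finset.sum_comm
    _ = ∑ p ∈ I', ∑ i ∈ I, ∑ q ∈ J' p, ∑ j ∈ J i, t i j p q :=
        Finset.sum_congr rfl fun p _ => Finset.sum_congr rfl fun i _ => Finset.sum_comm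
    _ = ∑ p ∈ I', ∑ q ∈ J' p, ∑ i ∈ I, ∑ j ∈ J i, t i j p q :=
        Finset.sum_congr rfl fun p _ => Finset.sum_comm

theorem antipode_mul_antidistrib' (x y : A) :
    antipode (R := R) (x * y) = antipode (R := R) y * antipode (R := R) x := by
  classical
  set S : A →ₗ[R] A := antipode (R := R) with hSdef
  let r : Coalgebra.Repr R x (A × A) := Coalgebra.Repr.arbitrary R x
  let r1 : ∀ i : A × A, Coalgebra.Repr R (r.left i) (A × A) := fun i => Coalgebra.Repr.arbitrary R _
  let r2 : ∀ i : A × A, Coalgebra.Repr R (r.right i) (A × A) := fun i => Coalgebra.Repr.arbitrary R _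
  let t : Coalgebra.Repr R y (A × A) := Coalgebra.Repr.arbitrary R y
  let t1 : ∀ p : A × A, Coalgebra.Repr R (t.left p) (A × A) := fun p => Coalgebra.Repr.arbitrary R _
  let t2 : ∀ p : A × A, Coalgebra.Repr R (t.right p) (A × A) := fun p => Coalgebra.Repr.arbitrary R _
  have claim1 :
      (∑ i ∈ r.index, ∑ j ∈ (r2 i).index, ∑ p ∈ t.index, ∑ q ∈ (t2 p).index,
        S (r.left i * t.left p) *
          (((r2 i).left j * (t2 p).left q) * (S ((t2 p).right q) * S ((r2 i).right j))))
        = S (x * y) := by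
    calc ∑ i ∈ r.index, ∑ j ∈ (r2 i).index, ∑ p ∈ t.index, ∑ q ∈ (t2 p).index,
          S (r.left i * t.left p) *
            (((r2 i).left j * (t2 p).left q) * (S ((t2 p).right q) * S ((r2 i).right j)))
        = ∑ i ∈ r.index, ∑ j ∈ (r2 i).index, ∑ p ∈ t.index,
            (S (r.left i * t.left p) * (r2 i).left j) *
              ((∑ q ∈ (t2 p).index, (t2 p).left q * S ((t2 p).right q)) * S ((r2 i).right j)) := by
          refine Finset.sum_congr rfl fun i _ => Finset.sum_congr rfl fun j _ =>
            Finset.sum_congr rfl fun p _ => ?_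
          simp only [Finset.mul_sum, Finset.sum_mul, mul_assoc]
      _ = ∑ i ∈ r.index, ∑ j ∈ (r2 i).index, ∑ p ∈ t.index,
            counit (R := R) (t.right p) •
              ((S (r.left i * t.left p) * (r2 i).left j) * S ((r2 i).right j)) := by
          refine Finset.sum_congr rfl fun i _ => Finset.sum_congr rfl fun j _ =>
            Finset.sum_congr rfl fun p _ => ?_
          rw [HopfAlgebra.sum_mul_antipode_eq_smul (t2 p)]
          simp [smul_mul_assoc, mul_smul_comm]
      _ = ∑ i ∈ r.index, ∑ j ∈ (r2 i).index,
            (S (r.left i * y) * (r2 i).left j) * S ((r2 i).right j) := by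
          refine Finset.sum_congr rfl fun i _ => Finset.sum_congr rfl fun j _ => ?_
          have h := repr_sum_smul_counit t
          calc ∑ p ∈ t.index, counit (R := R) (t.right p) •
                  ((S (r.left i * t.left p) * (r2 i).left j) * S ((r2 i).right j))
              = (S (r.left i * (∑ p ∈ t.index, counit (R := R) (t.right p) • t.left p)) *
                  (r2 i).left j) * S ((r2 i).right j) := by
                simp only [Finset.mul_sum, map_sum, Finset.sum_mul, mul_smul_comm,
                  smul_mul_assoc, map_smul, mul_assoc]
            _ = (S (r.left i * y) * (r2 i).left j) * S ((r2 i).right j) := by rw [h]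
      _ = ∑ i ∈ r.index, counit (R := R) (r.right i) • S (r.left i * y) := by
          refine Finset.sum_congr rfl fun i _ => ?_
          calc ∑ j ∈ (r2 i).index,
                (S (r.left i * y) * (r2 i).left j) * S ((r2 i).right j)
              = S (r.left i * y) *
                  (∑ j ∈ (r2 i).index, (r2 i).left j * S ((r2 i).right j)) := by
                simp only [Finset.mul_sum, mul_assoc]
            _ = counit (R := R) (r.right i) • S (r.left i * y) := by
                rw [HopfAlgebra.sum_mul_antipode_eq_smul (r2 i)]
                simp [mul_smul_comm]
      _ = S (x * y) := by
          have h := repr_sum_smul_counit r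
          calc ∑ i ∈ r.index, counit (R := R) (r.right i) • S (r.left i * y)
              = S ((∑ i ∈ r.index, counit (R := R) (r.right i) • r.left i) * y) := by
                simp only [Finset.sum_mul, map_sum, smul_mul_assoc, map_smul]
            _ = S (x * y) := by rw [h]
  have claim2 :
      (∑ i ∈ r.index, ∑ j ∈ (r2 i).index, ∑ p ∈ t.index, ∑ q ∈ (t2 p).index,
        S (r.left i * t.left p) *
          (((r2 i).left j * (t2 p).left q) * (S ((t2 p).right q) * S ((r2 i).right j))))
        = S y * S x := by
    calc ∑ i ∈ r.index, ∑ j ∈ (r2 i).index, ∑ p ∈ t.index, ∑ q ∈ (t2 p).index,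
          S (r.left i * t.left p) *
            (((r2 i).left j * (t2 p).left q) * (S ((t2 p).right q) * S ((r2 i).right j)))
        = ∑ i ∈ r.index, ∑ j ∈ (r2 i).index, ∑ p ∈ t.index, ∑ q ∈ (t1 p).index,
            S (r.left i * (t1 p).left q) *
              (((r2 i).left j * (t1 p).right q) * (S (t.right p) * S ((r2 i).right j))) := by
          refine Finset.sum_congr rfl fun i _ => Finset.sum_congr rfl fun j _ => ?_
          have := triple_sum_eq (S ∘ₗ LinearMap.mulLeft R (r.left i))
            (LinearMap.mulLeft R ((r2 i).left j))
            ((LinearMap.mulRight R (S ((r2 i).right j))) ∘ₗ S) t t1 t2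
          simpa using this.symm
      _ = ∑ p ∈ t.index, ∑ q ∈ (t1 p).index, ∑ i ∈ r.index, ∑ j ∈ (r2 i).index,
            S (r.left i * (t1 p).left q) *
              (((r2 i).left j * (t1 p).right q) * (S (t.right p) * S ((r2 i).right j))) :=
          sum_swap4 _ _ _ _ _
      _ = ∑ p ∈ t.index, ∑ q ∈ (t1 p).index, ∑ i ∈ r.index, ∑ j ∈ (r1 i).index,
            S ((r1 i).left j * (t1 p).left q) *
              (((r1 i).right j * (t1 p).right q) * (S (t.right p) * S (r.right i))) := by
          refine Finset.sum_congr rfl fun p _ => Finset.sum_congr rfl fun q _ => ?_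
          have := triple_sum_eq (S ∘ₗ LinearMap.mulRight R ((t1 p).left q))
            (LinearMap.mulRight R ((t1 p).right q))
            ((LinearMap.mulLeft R (S (t.right p))) ∘ₗ S) r r1 r2
          simpa using this.symm
      _ = ∑ p ∈ t.index, ∑ i ∈ r.index, ∑ q ∈ (t1 p).index, ∑ j ∈ (r1 i).index,
            S ((r1 i).left j * (t1 p).left q) *
              (((r1 i).right j * (t1 p).right q) * (S (t.right p) * S (r.right i))) :=
          Finset.sum_congr rfl fun p _ => Finset.sum_comm
      _ = ∑ p ∈ t.index, ∑ i ∈ r.index,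
            (∑ q ∈ (t1 p).index, ∑ j ∈ (r1 i).index,
              S ((r1 i).left j * (t1 p).left q) * ((r1 i).right j * (t1 p).right q)) *
              (S (t.right p) * S (r.right i)) := by
          refine Finset.sum_congr rfl fun p _ => Finset.sum_congr rfl fun i _ => ?_
          simp only [Finset.sum_mul, mul_assoc]
      _ = ∑ p ∈ t.index, ∑ i ∈ r.index,
            (counit (R := R) (r.left i) * counit (R := R) (t.left p)) •
              (S (t.right p) * S (r.right i)) := by
          refine Finset.sum_congr rfl fun p _ => Finset.sum_congr rfl fun i _ => ?_
          have h := HopfAlgebra.sum_antipode_mul_eq_smul (R := R) (mulRepr (r1 i) (t1 p))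
          rw [← hSdef] at h
          have h2 : ∑ j ∈ (r1 i).index, ∑ q ∈ (t1 p).index,
              S ((r1 i).left j * (t1 p).left q) * ((r1 i).right j * (t1 p).right q)
              = counit (R := R) (r.left i * t.left p) • (1 : A) := by
            refine Eq.trans ?_ h
            exact (Finset.sum_product ((r1 i).index) ((t1 p).index)
              (fun z => S ((r1 i).left z.1 * (t1 p).left z.2) *
                ((r1 i).right z.1 * (t1 p).right z.2))).symm
          rw [Finset.sum_comm, h2]
          simp [smul_mul_assoc]
      _ = S y * S x := by
          have hy : ∑ p ∈ t.index, counit (R := R) (t.left p) • S (t.right p) = S y := by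
            calc ∑ p ∈ t.index, counit (R := R) (t.left p) • S (t.right p)
                = S (∑ p ∈ t.index, counit (R := R) (t.left p) • t.right p) := by
                  rw [map_sum]
                  exact Finset.sum_congr rfl fun p _ => (map_smul S _ _).symm
              _ = S y := by rw [repr_sum_counit_smul t]
          have hx : ∑ i ∈ r.index, counit (R := R) (r.left i) • S (r.right i) = S x := by
            calc ∑ i ∈ r.index, counit (R := R) (r.left i) • S (r.right i)
                = S (∑ i ∈ r.index, counit (R := R) (r.left i) • r.right i) := by
                  rw [map_sum]
                  exact Finset.sum_congr rfl fun i _ => (map_smul S _ _).symm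
              _ = S x := by rw [repr_sum_counit_smul r]
          calc ∑ p ∈ t.index, ∑ i ∈ r.index,
                (counit (R := R) (r.left i) * counit (R := R) (t.left p)) •
                  (S (t.right p) * S (r.right i))
              = (∑ p ∈ t.index, counit (R := R) (t.left p) • S (t.right p)) *
                  (∑ i ∈ r.index, counit (R := R) (r.left i) • S (r.right i)) := by
                rw [Finset.sum_mul]
                refine Finset.sum_congr rfl fun p _ => ?_
                rw [Finset.mul_sum]
                refine Finset.sum_congr rfl fun i _ => ?_
                simp [smul_mul_assoc, mul_smul_comm, smul_smul, mul_comm]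
            _ = S y * S x := by rw [hy, hx]
  exact claim1.symm.trans claim2

end Helpers

/-- Let `H` be a finite-dimensional unimodular ribbon Hopf algebra with right integral `λ`
(quantum character: `λ(xy) = λ(S²(y)x)`), bijective antipode with inverse `Sinv`, and
`R`-matrix `R = Σᵢ aᵢ ⊗ bᵢ` satisfying `(S⊗S)(R) = R`. Then for all `f ∈ H*` and `x ∈ H`:
`Σ_{i,j} f(bⱼ aᵢ) λ(S(aⱼ bᵢ) x) = f( Σ_{i,j} λ(S²(x) bⱼ aᵢ) • S⁻¹(aⱼ bᵢ) )`,
i.e. `(ψ_X ∘ φ_X)* = φ_X ∘ ψ_X`. -/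
theorem stmt10 {k H : Type} [Field k] [Ring H] [HopfAlgebra k H] [FiniteDimensional k H]
    (lam : H →ₗ[k] k)
    (hqc : ∀ a b : H, lam (a * b) =
      lam (HopfAlgebra.antipode (R := k) (HopfAlgebra.antipode (R := k) b) * a))
    (Sinv : H →ₗ[k] H)
    (hS1 : ∀ x : H, Sinv (HopfAlgebra.antipode (R := k) x) = x)
    (hS2 : ∀ x : H, HopfAlgebra.antipode (R := k) (Sinv x) = x)
    {ι : Type} (s : Finset ι) (a b : ι → H)
    (hSS : ∑ i ∈ s, (HopfAlgebra.antipode (R := k) (a i)) ⊗ₜ[k]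
        (HopfAlgebra.antipode (R := k) (b i)) = ∑ i ∈ s, a i ⊗ₜ[k] b i) :
    ∀ (f : H →ₗ[k] k) (x : H),
      ∑ i ∈ s, ∑ j ∈ s, f (b j * a i) * lam (HopfAlgebra.antipode (R := k) (a j * b i) * x)
        = f (∑ i ∈ s, ∑ j ∈ s,
            lam (HopfAlgebra.antipode (R := k) (HopfAlgebra.antipode (R := k) x) *
              (b j * a i)) • Sinv (a j * b i)) := by
  intro f x
  set S : H →ₗ[k] H := HopfAlgebra.antipode (R := k) with hSdef
  have Smul : ∀ u v : H, S (u * v) = S v * S u := fun u v =>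
    antipode_mul_antidistrib' u v
  have subst : ∀ p q : H →ₗ[k] k,
      ∑ i ∈ s, p (S (a i)) * q (S (b i)) = ∑ i ∈ s, p (a i) * q (b i) := by
    intro p q
    have := congrArg (LinearMap.mul' k k ∘ₗ TensorProduct.map p q) hSS
    simpa [map_sum, TensorProduct.map_tmul, LinearMap.mul'_apply] using this
  have hR : f (∑ i ∈ s, ∑ j ∈ s, lam (S (S x) * (b j * a i)) • Sinv (a j * b i))
      = ∑ i ∈ s, ∑ j ∈ s, lam (S (S x) * (b j * a i)) * f (Sinv (a j * b i)) := by
    rw [map_sum]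
    refine Finset.sum_congr rfl fun i _ => ?_
    rw [map_sum]
    refine Finset.sum_congr rfl fun j _ => ?_
    rw [map_smul, smul_eq_mul]
  rw [hR]
  calc ∑ i ∈ s, ∑ j ∈ s, f (b j * a i) * lam (S (a j * b i) * x)
      = ∑ i ∈ s, ∑ j ∈ s,
          f (Sinv (S (a i) * S (b j))) * lam (S (S x) * (S (b i) * S (a j))) := by
        refine Finset.sum_congr rfl fun i _ => Finset.sum_congr rfl fun j _ => ?_
        rw [hqc]
        conv_lhs => rw [← hS1 (b j * a i), Smul (b j) (a i), Smul (a j) (b i)]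
    _ = ∑ i ∈ s, ∑ j ∈ s,
          lam (S (S x) * (S (b i) * a j)) * f (Sinv (S (a i) * b j)) := by
        refine Finset.sum_congr rfl fun i _ => ?_
        have h := subst (lam ∘ₗ LinearMap.mulLeft k (S (S x)) ∘ₗ LinearMap.mulLeft k (S (b i)))
          (f ∘ₗ Sinv ∘ₗ LinearMap.mulLeft k (S (a i)))
        simp only [LinearMap.coe_comp, Function.comp_apply, LinearMap.mulLeft_apply] at h
        rw [← h]
        exact Finset.sum_congr rfl fun j _ => mul_comm _ _
    _ = ∑ j ∈ s, ∑ i ∈ s,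
          lam (S (S x) * (S (b i) * a j)) * f (Sinv (S (a i) * b j)) := Finset.sum_comm
    _ = ∑ j ∈ s, ∑ i ∈ s,
          f (Sinv (a i * b j)) * lam (S (S x) * (b i * a j)) := by
        refine Finset.sum_congr rfl fun j _ => ?_
        have h := subst (f ∘ₗ Sinv ∘ₗ LinearMap.mulRight k (b j))
          (lam ∘ₗ LinearMap.mulLeft k (S (S x)) ∘ₗ LinearMap.mulRight k (a j))
        simp only [LinearMap.coe_comp, Function.comp_apply, LinearMap.mulRight_apply,
          LinearMap.mulLeft_apply] at h
        rw [← h]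
        exact Finset.sum_congr rfl fun i _ => mul_comm _ _
    _ = ∑ i ∈ s, ∑ j ∈ s, lam (S (S x) * (b j * a i)) * f (Sinv (a j * b i)) :=
        Finset.sum_congr rfl fun j _ => Finset.sum_congr rfl fun i _ => mul_comm _ _
end

section
/- Let H be a finite-dimensional Hopf algebra with left cointegral Λ. Define β : H → H ⊗ X by β(h) = Λ_{(1)}h ⊗ S⁻¹(Λ_{(2)}), where H is the regular representation and X is the dual coadjoint representation. Then β is an H-module morphism; concretely, for all h ∈ H: h_{(1)}Λ_{(1)} S(h_{(4)}) ⊗ S⁻¹(h_{(2)} Λ_{(2)} S(h_{(3)})) = ε(h)·Λ_{(1)} ⊗ S⁻¹(Λ_{(2)}). -/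
open TensorProduct

/-- The three-fold iterated comultiplication `Δ³ : H → H ⊗ (H ⊗ (H ⊗ H))`. -/
noncomputable def comul3 {k H : Type} [Field k] [Ring H] [HopfAlgebra k H] :
    H →ₗ[k] H ⊗[k] (H ⊗[k] (H ⊗[k] H)) :=
  (LinearMap.lTensor H (LinearMap.lTensor H (Coalgebra.comul (R := k) (A := H)))) ∘ₗ
    (LinearMap.lTensor H (Coalgebra.comul (R := k) (A := H))) ∘ₗ
      (Coalgebra.comul (R := k) (A := H))

open Coalgebra


section Conv
variable {k : Type} [Field k] {C A : Type} [AddCommGroup C] [Module k C] [Coalgebra k C]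
  [Ring A] [Algebra k A]

/-- convolution product -/
noncomputable def conv (f g : C →ₗ[k] A) : C →ₗ[k] A :=
  LinearMap.mul' k A ∘ₗ TensorProduct.map f g ∘ₗ Coalgebra.comul

noncomputable def convUnit : C →ₗ[k] A := Algebra.linearMap k A ∘ₗ Coalgebra.counit

lemma conv_repr (f g : C →ₗ[k] A) {c : C} {ι : Type*} (r : Repr k c ι) :
    conv f g c = ∑ i ∈ r.index, f (r.left i) * g (r.right i) := by
  rw [conv]
  simp only [LinearMap.comp_apply, ← r.eq, map_sum, TensorProduct.map_tmul,
    LinearMap.mul'_apply]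

lemma counit_smul_sum {B : Type} [AddCommGroup B] [Module k B] (f : C →ₗ[k] B) (c : C)
    {ι : Type*} (r : Repr k c ι) :
    ∑ i ∈ r.index, Coalgebra.counit (R := k) (r.left i) • f (r.right i) = f c := by
  have := Coalgebra.sum_counit_tmul_map_eq f c (repr := r)
  apply_fun (TensorProduct.lid k B) at this
  simp only [map_sum, TensorProduct.lid_tmul, one_smul] at this
  exact this

lemma sum_smul_counit {B : Type} [AddCommGroup B] [Module k B] (f : C →ₗ[k] B) (c : C)
    {ι : Type*} (r : Repr k c ι) :
    ∑ i ∈ r.index, Coalgebra.counit (R := k) (r.right i) • f (r.left i) = f c := by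
  have := Coalgebra.sum_map_tmul_counit_eq f c (repr := r)
  apply_fun (TensorProduct.rid k B) at this
  simp only [map_sum, TensorProduct.rid_tmul, one_smul] at this
  exact this

lemma conv_unit_left (f : C →ₗ[k] A) : conv convUnit f = f := by
  ext c
  rw [conv_repr _ _ (ℛ k c)]
  simp only [convUnit, LinearMap.comp_apply, Algebra.linearMap_apply,
    ← Algebra.smul_def]
  exact counit_smul_sum f c (ℛ k c)

lemma conv_unit_right (f : C →ₗ[k] A) : conv f convUnit = f := by
  ext c
  rw [conv_repr _ _ (ℛ k c)]
  simp only [convUnit, LinearMap.comp_apply, Algebra.linearMap_apply]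
  calc ∑ i ∈ (ℛ k c).index, f ((ℛ k c).left i) * algebraMap k A (counit ((ℛ k c).right i))
      = ∑ i ∈ (ℛ k c).index, Coalgebra.counit (R := k) ((ℛ k c).right i) • f ((ℛ k c).left i) := by
        refine Finset.sum_congr rfl fun i _ => ?_
        rw [Algebra.smul_def]
        exact (Algebra.commutes _ _).symm
    _ = f c := sum_smul_counit f c (ℛ k c)

lemma conv_assoc (f g h : C →ₗ[k] A) : conv (conv f g) h = conv f (conv g h) := by
  ext c
  set r := ℛ k c
  have key := Coalgebra.sum_map_tmul_tmul_eq f g h c (repr := r)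
    (a₁ := fun i => ℛ k (r.left i)) (a₂ := fun i => ℛ k (r.right i))
  apply_fun (LinearMap.mul' k A ∘ₗ LinearMap.lTensor A (LinearMap.mul' k A)) at key
  simp only [map_sum, LinearMap.comp_apply, LinearMap.lTensor_tmul, LinearMap.mul'_apply] at key
  rw [conv_repr _ _ r, conv_repr _ _ r]
  calc ∑ i ∈ r.index, conv f g (r.left i) * h (r.right i)
      = ∑ i ∈ r.index, ∑ j ∈ (ℛ k (r.left i)).index,
          f ((ℛ k (r.left i)).left j) * (g ((ℛ k (r.left i)).right j) * h (r.right i)) := by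
        refine Finset.sum_congr rfl fun i _ => ?_
        rw [conv_repr _ _ (ℛ k (r.left i)), Finset.sum_mul]
        exact Finset.sum_congr rfl fun j _ => mul_assoc _ _ _
    _ = ∑ i ∈ r.index, ∑ j ∈ (ℛ k (r.right i)).index,
          f (r.left i) * (g ((ℛ k (r.right i)).left j) * h ((ℛ k (r.right i)).right j)) :=
        key.symm
    _ = ∑ i ∈ r.index, f (r.left i) * conv g h (r.right i) := by
        refine Finset.sum_congr rfl fun i _ => ?_
        rw [conv_repr _ _ (ℛ k (r.right i)), Finset.mul_sum]

lemma conv_inv_unique {f g g' : C →ₗ[k] A} (h1 : conv f g = convUnit)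
    (h2 : conv g' f = convUnit) : g' = g := by
  calc g' = conv g' convUnit := (conv_unit_right g').symm
    _ = conv g' (conv f g) := by rw [h1]
    _ = conv (conv g' f) g := (conv_assoc _ _ _).symm
    _ = conv convUnit g := by rw [h2]
    _ = g := conv_unit_left g

end Conv

section Hopf
variable {k H : Type} [Field k] [Ring H] [HopfAlgebra k H]

open Coalgebra HopfAlgebra

lemma comul_tensor_tmul (a b : H) :
    Coalgebra.comul (R := k) (a ⊗ₜ[k] b) =
      ∑ i ∈ (ℛ k a).index, ∑ j ∈ (ℛ k b).index,
        ((ℛ k a).left i ⊗ₜ[k] (ℛ k b).left j) ⊗ₜ[k]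
          ((ℛ k a).right i ⊗ₜ[k] (ℛ k b).right j) := by
  show TensorProduct.tensorTensorTensorComm k H H H H
      (TensorProduct.map Coalgebra.comul Coalgebra.comul (a ⊗ₜ[k] b)) = _
  rw [TensorProduct.map_tmul, ← (ℛ k a).eq, ← (ℛ k b).eq]
  rw [TensorProduct.sum_tmul]
  rw [map_sum]
  refine Finset.sum_congr rfl fun i _ => ?_
  rw [TensorProduct.tmul_sum, map_sum]
  refine Finset.sum_congr rfl fun j _ => ?_
  rw [TensorProduct.tensorTensorTensorComm_tmul]

lemma antipode_mul_rev (a b : H) :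
    antipode (R := k) (a * b) = antipode (R := k) b * antipode (R := k) a := by
  have key : ((LinearMap.mul' k H ∘ₗ TensorProduct.map (antipode (R := k) (A := H))
        (antipode (R := k) (A := H)) ∘ₗ (TensorProduct.comm k H H).toLinearMap) :
          H ⊗[k] H →ₗ[k] H) =
      (antipode (R := k) (A := H)) ∘ₗ LinearMap.mul' k H := by
    refine conv_inv_unique (f := LinearMap.mul' k H) ?_ ?_
    · -- conv μ (S ∘ μ) = unit
      ext a b
      simp only [TensorProduct.AlgebraTensorModule.curry_apply, TensorProduct.curry_apply, LinearMap.coe_restrictScalars]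
      rw [conv, LinearMap.comp_apply, LinearMap.comp_apply, comul_tensor_tmul a b]
      rw [map_sum, map_sum]
      simp only [map_sum, TensorProduct.map_tmul, LinearMap.mul'_apply,
        LinearMap.comp_apply]
      rw [← Finset.sum_product']
      have := HopfAlgebra.sum_mul_antipode_eq_algebraMap_counit (R := k) ((ℛ k a).mul (ℛ k b))
      simp only [Coalgebra.Repr.mul_left, Coalgebra.Repr.mul_right, Coalgebra.Repr.mul_index] at this
      rw [this]
      simp only [convUnit, LinearMap.comp_apply, Algebra.linearMap_apply]
      congr 1
      show Coalgebra.counit (R := k) (a*b) = _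
      rw [Bialgebra.counit_mul, TensorProduct.counit_tmul, smul_eq_mul, mul_comm]
    · -- conv ν μ = unit
      ext a b
      simp only [TensorProduct.AlgebraTensorModule.curry_apply, TensorProduct.curry_apply, LinearMap.coe_restrictScalars]
      rw [conv, LinearMap.comp_apply, LinearMap.comp_apply, comul_tensor_tmul a b]
      rw [map_sum, map_sum]
      simp only [map_sum, TensorProduct.map_tmul, LinearMap.mul'_apply,
        LinearMap.comp_apply, LinearEquiv.coe_coe, TensorProduct.comm_tmul]
      have : ∀ i ∈ (ℛ k a).index, ∀ j ∈ (ℛ k b).index,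
          antipode (R := k) ((ℛ k b).left j) * antipode (R := k) ((ℛ k a).left i) *
            ((ℛ k a).right i * (ℛ k b).right j) =
          antipode (R := k) ((ℛ k b).left j) *
            ((antipode (R := k) ((ℛ k a).left i) * (ℛ k a).right i) * (ℛ k b).right j) := by
        intros; rw [mul_assoc, mul_assoc]
      rw [Finset.sum_congr rfl (fun i hi => Finset.sum_congr rfl (fun j hj => this i hi j hj))]
      rw [Finset.sum_comm]
      have hsum : ∀ j, ∑ i ∈ (ℛ k a).index,
          antipode (R := k) ((ℛ k b).left j) *
            ((antipode (R := k) ((ℛ k a).left i) * (ℛ k a).right i) * (ℛ k b).right j) =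
          Coalgebra.counit (R := k) a •
            (antipode (R := k) ((ℛ k b).left j) * (ℛ k b).right j) := by
        intro j
        rw [← Finset.mul_sum, ← Finset.sum_mul]
        rw [HopfAlgebra.sum_antipode_mul_eq_smul (R := k) (ℛ k a)]
        rw [smul_mul_assoc, one_mul, mul_smul_comm]
      rw [Finset.sum_congr rfl (fun j _ => hsum j), ← Finset.smul_sum]
      rw [HopfAlgebra.sum_antipode_mul_eq_smul (R := k) (ℛ k b)]
      rw [smul_smul]
      simp only [convUnit, LinearMap.comp_apply, Algebra.linearMap_apply]
      rw [Algebra.algebraMap_eq_smul_one, TensorProduct.counit_tmul, smul_eq_mul, mul_comm]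
  have := LinearMap.congr_fun key (a ⊗ₜ[k] b)
  simpa using this.symm

/-- The map `u ⊗ (v ⊗ w) ↦ (S u * v) ⊗ w`. -/
noncomputable def Xi : H ⊗[k] (H ⊗[k] H) →ₗ[k] H ⊗[k] H :=
  LinearMap.rTensor H (LinearMap.mul' k H) ∘ₗ
    (TensorProduct.assoc k H H H).symm.toLinearMap ∘ₗ
      LinearMap.rTensor (H ⊗[k] H) (antipode (R := k) (A := H))

@[simp] lemma Xi_tmul (u v w : H) :
    Xi (u ⊗ₜ[k] (v ⊗ₜ[k] w)) = (antipode (R := k) u * v) ⊗ₜ[k] w := by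
  simp [Xi]

/-- Claim B : `Σ (S y₁ ⊗ 1) * Δ y₂ = 1 ⊗ y`. -/
lemma claimB (y : H) {ι : Type*} (ry : Repr k y ι) :
    ∑ m ∈ ry.index, ((antipode (R := k) (ry.left m) ⊗ₜ[k] (1 : H)) *
        Coalgebra.comul (R := k) (ry.right m)) = (1 : H) ⊗ₜ[k] y := by
  have key := Coalgebra.sum_tmul_tmul_eq ry (fun m => ℛ k (ry.left m))
    (fun m => ℛ k (ry.right m))
  apply_fun (Xi (k := k) (H := H)) at key
  simp only [map_sum, Xi_tmul] at key
  calc ∑ m ∈ ry.index, ((antipode (R := k) (ry.left m) ⊗ₜ[k] (1 : H)) *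
        Coalgebra.comul (R := k) (ry.right m))
      = ∑ m ∈ ry.index, ∑ n ∈ (ℛ k (ry.right m)).index,
          (antipode (R := k) (ry.left m) * (ℛ k (ry.right m)).left n) ⊗ₜ[k]
            (ℛ k (ry.right m)).right n := by
        refine Finset.sum_congr rfl fun m _ => ?_
        rw [← (ℛ k (ry.right m)).eq, Finset.mul_sum]
        refine Finset.sum_congr rfl fun n _ => ?_
        rw [Algebra.TensorProduct.tmul_mul_tmul, one_mul]
    _ = ∑ m ∈ ry.index, ∑ n ∈ (ℛ k (ry.left m)).index,
          (antipode (R := k) ((ℛ k (ry.left m)).left n) * (ℛ k (ry.left m)).right n) ⊗ₜ[k]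
            ry.right m := key.symm
    _ = ∑ m ∈ ry.index, Coalgebra.counit (R := k) (ry.left m) • ((1 : H) ⊗ₜ[k] ry.right m) := by
        refine Finset.sum_congr rfl fun m _ => ?_
        rw [← TensorProduct.sum_tmul, HopfAlgebra.sum_antipode_mul_eq_smul (R := k)
          (ℛ k (ry.left m))]
        rw [TensorProduct.smul_tmul', TensorProduct.smul_tmul]
    _ = (1 : H) ⊗ₜ[k] y := by
        have := counit_smul_sum ((TensorProduct.mk k H H) 1) y ry
        simpa using this

lemma antipode_comul (a : H) :
    Coalgebra.comul (R := k) (antipode (R := k) a) =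
      (TensorProduct.comm k H H) (TensorProduct.map (antipode (R := k) (A := H))
        (antipode (R := k) (A := H)) (Coalgebra.comul (R := k) a)) := by
  have key : (((TensorProduct.comm k H H).toLinearMap ∘ₗ
        TensorProduct.map (antipode (R := k) (A := H)) (antipode (R := k) (A := H)) ∘ₗ
          Coalgebra.comul) : H →ₗ[k] H ⊗[k] H) =
      (Coalgebra.comul (R := k) (A := H)) ∘ₗ (antipode (R := k) (A := H)) := by
    refine conv_inv_unique (f := (Coalgebra.comul : H →ₗ[k] H ⊗[k] H)) ?_ ?_
    · -- conv Δ (Δ ∘ S) = unit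
      ext c
      rw [conv_repr _ _ (ℛ k c)]
      simp only [LinearMap.comp_apply]
      calc ∑ i ∈ (ℛ k c).index, Coalgebra.comul (R := k) ((ℛ k c).left i) *
            Coalgebra.comul (R := k) (antipode (R := k) ((ℛ k c).right i))
          = ∑ i ∈ (ℛ k c).index, Coalgebra.comul (R := k)
              ((ℛ k c).left i * antipode (R := k) ((ℛ k c).right i)) := by
            refine Finset.sum_congr rfl fun i _ => ?_
            rw [Bialgebra.comul_mul]
        _ = Coalgebra.comul (R := k)
              (∑ i ∈ (ℛ k c).index, (ℛ k c).left i * antipode (R := k) ((ℛ k c).right i)) := by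
            rw [map_sum]
        _ = convUnit c := by
            rw [HopfAlgebra.sum_mul_antipode_eq_algebraMap_counit (R := k) (ℛ k c)]
            rw [Bialgebra.comul_algebraMap]
            rfl
    · -- conv (τ ∘ (S ⊗ S) ∘ Δ) Δ = unit
      ext c
      rw [conv_repr _ _ (ℛ k c)]
      set r := ℛ k c with hr
      have key2 := Coalgebra.sum_tmul_tmul_eq r (fun i => ℛ k (r.left i))
        (fun i => ℛ k (r.right i))
      -- Θfull : u ⊗ (v ⊗ w) ↦ (S v ⊗ S u) * Δ w
      set Θ : H ⊗[k] (H ⊗[k] H) →ₗ[k] H ⊗[k] H :=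
        (TensorProduct.lift (((LinearMap.mul k (H ⊗[k] H)) ∘ₗ
          ((TensorProduct.comm k H H).toLinearMap ∘ₗ
            TensorProduct.map (antipode (R := k) (A := H)) (antipode (R := k) (A := H)))).compl₂
              (Coalgebra.comul (R := k) (A := H)))) ∘ₗ
          (TensorProduct.assoc k H H H).symm.toLinearMap with hΘ
      have hΘt : ∀ u v w : H, Θ (u ⊗ₜ[k] (v ⊗ₜ[k] w)) =
          ((antipode (R := k) v ⊗ₜ[k] antipode (R := k) u) *
            Coalgebra.comul (R := k) w) := by
        intro u v w
        simp [hΘ, TensorProduct.lift.tmul]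
      apply_fun Θ at key2
      simp only [map_sum, hΘt] at key2
      calc ∑ i ∈ r.index, ((TensorProduct.comm k H H).toLinearMap ∘ₗ
            TensorProduct.map (antipode (R := k) (A := H)) (antipode (R := k) (A := H)) ∘ₗ
              Coalgebra.comul) (r.left i) * Coalgebra.comul (R := k) (r.right i)
          = ∑ i ∈ r.index, ∑ j ∈ (ℛ k (r.left i)).index,
              (antipode (R := k) ((ℛ k (r.left i)).right j) ⊗ₜ[k]
                antipode (R := k) ((ℛ k (r.left i)).left j)) *
                  Coalgebra.comul (R := k) (r.right i) := by
            refine Finset.sum_congr rfl fun i _ => ?_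
            rw [LinearMap.comp_apply, LinearMap.comp_apply, ← (ℛ k (r.left i)).eq]
            rw [map_sum, map_sum, Finset.sum_mul]
            refine Finset.sum_congr rfl fun j _ => ?_
            rw [TensorProduct.map_tmul, LinearEquiv.coe_coe, TensorProduct.comm_tmul]
        _ = ∑ i ∈ r.index, ∑ m ∈ (ℛ k (r.right i)).index,
              (antipode (R := k) ((ℛ k (r.right i)).left m) ⊗ₜ[k]
                antipode (R := k) (r.left i)) *
                  Coalgebra.comul (R := k) ((ℛ k (r.right i)).right m) := key2
        _ = ∑ i ∈ r.index, ((1 : H) ⊗ₜ[k] antipode (R := k) (r.left i)) *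
              ((1 : H) ⊗ₜ[k] r.right i) := by
            refine Finset.sum_congr rfl fun i _ => ?_
            calc ∑ m ∈ (ℛ k (r.right i)).index,
                  (antipode (R := k) ((ℛ k (r.right i)).left m) ⊗ₜ[k]
                    antipode (R := k) (r.left i)) *
                      Coalgebra.comul (R := k) ((ℛ k (r.right i)).right m)
                = ∑ m ∈ (ℛ k (r.right i)).index,
                    ((1 : H) ⊗ₜ[k] antipode (R := k) (r.left i)) *
                      ((antipode (R := k) ((ℛ k (r.right i)).left m) ⊗ₜ[k] (1 : H)) *
                        Coalgebra.comul (R := k) ((ℛ k (r.right i)).right m)) := by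
                  refine Finset.sum_congr rfl fun m _ => ?_
                  rw [← mul_assoc, Algebra.TensorProduct.tmul_mul_tmul, one_mul, mul_one]
              _ = ((1 : H) ⊗ₜ[k] antipode (R := k) (r.left i)) *
                    ∑ m ∈ (ℛ k (r.right i)).index,
                      ((antipode (R := k) ((ℛ k (r.right i)).left m) ⊗ₜ[k] (1 : H)) *
                        Coalgebra.comul (R := k) ((ℛ k (r.right i)).right m)) :=
                  (Finset.mul_sum _ _ _).symm
              _ = ((1 : H) ⊗ₜ[k] antipode (R := k) (r.left i)) *
                    ((1 : H) ⊗ₜ[k] r.right i) := by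
                  rw [claimB (r.right i) (ℛ k (r.right i))]
        _ = (1 : H) ⊗ₜ[k] (∑ i ∈ r.index, antipode (R := k) (r.left i) * r.right i) := by
            rw [TensorProduct.tmul_sum]
            refine Finset.sum_congr rfl fun i _ => ?_
            rw [Algebra.TensorProduct.tmul_mul_tmul, one_mul]
        _ = convUnit c := by
            rw [HopfAlgebra.sum_antipode_mul_eq_smul (R := k) r]
            rw [TensorProduct.tmul_smul]
            show Coalgebra.counit (R := k) c • ((1 : H) ⊗ₜ[k] (1 : H)) = _
            rw [← Algebra.TensorProduct.one_def]
            simp only [convUnit, LinearMap.comp_apply, Algebra.linearMap_apply]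
            rw [Algebra.algebraMap_eq_smul_one]
  have := LinearMap.congr_fun key (a)
  simpa using this.symm

end Hopf

section Main
variable {k H : Type} [Field k] [Ring H] [HopfAlgebra k H]
open Coalgebra HopfAlgebra


/-- `Φ(a ⊗ (b ⊗ (x ⊗ y))) = (a ⊗ b) * c * (S y ⊗ S x)` -/
noncomputable def Phi (c : H ⊗[k] H) : H ⊗[k] (H ⊗[k] (H ⊗[k] H)) →ₗ[k] H ⊗[k] H :=
  (TensorProduct.lift ((LinearMap.mul k (H ⊗[k] H)) ∘ₗ (LinearMap.mulRight k c))) ∘ₗ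
    (TensorProduct.assoc k H H (H ⊗[k] H)).symm.toLinearMap ∘ₗ
      LinearMap.lTensor H (LinearMap.lTensor H ((TensorProduct.comm k H H).toLinearMap ∘ₗ
        TensorProduct.map (antipode (R := k) (A := H)) (antipode (R := k) (A := H))))

@[simp] lemma Phi_tmul (c : H ⊗[k] H) (a b x y : H) :
    Phi c (a ⊗ₜ[k] (b ⊗ₜ[k] (x ⊗ₜ[k] y))) =
      (a ⊗ₜ[k] b) * c * (antipode (R := k) y ⊗ₜ[k] antipode (R := k) x) := by
  simp [Phi, TensorProduct.lift.tmul]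

theorem key_lemma (Λ : H)
    (hleft : ∀ x : H, x * Λ = Coalgebra.counit (R := k) x • Λ)
    (hSΛ : antipode (R := k) Λ = Λ) (h : H) :
    Phi (Coalgebra.comul (R := k) Λ) (comul3 (k := k) h) =
      Coalgebra.counit (R := k) h • Coalgebra.comul (R := k) Λ := by
  have hrc : ∀ w : H, Λ * antipode (R := k) w = Coalgebra.counit (R := k) w • Λ := by
    intro w
    calc Λ * antipode (R := k) w = antipode (R := k) Λ * antipode (R := k) w := by rw [hSΛ]
      _ = antipode (R := k) (w * Λ) := (antipode_mul_rev w Λ).symm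
      _ = antipode (R := k) (Coalgebra.counit (R := k) w • Λ) := by rw [hleft]
      _ = Coalgebra.counit (R := k) w • Λ := by rw [map_smul, hSΛ]
  have P2 : ∀ w : H, Coalgebra.comul (R := k) Λ * Coalgebra.comul (R := k) (antipode (R := k) w)
      = Coalgebra.counit (R := k) w • Coalgebra.comul (R := k) Λ := by
    intro w
    rw [← Bialgebra.comul_mul, hrc, map_smul]
  set r := ℛ k h with hr
  -- expand comul3
  have hc3 : comul3 (k := k) h = ∑ i ∈ r.index, ∑ m ∈ (ℛ k (r.right i)).index,
      r.left i ⊗ₜ[k] ((ℛ k (r.right i)).left m ⊗ₜ[k]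
        Coalgebra.comul (R := k) ((ℛ k (r.right i)).right m)) := by
    rw [comul3, LinearMap.comp_apply, LinearMap.comp_apply, ← r.eq, map_sum, map_sum]
    refine Finset.sum_congr rfl fun i _ => ?_
    rw [LinearMap.lTensor_tmul, ← (ℛ k (r.right i)).eq, TensorProduct.tmul_sum, map_sum]
    simp only [LinearMap.lTensor_tmul]
  rw [hc3, map_sum]
  calc ∑ i ∈ r.index, Phi (Coalgebra.comul (R := k) Λ)
        (∑ m ∈ (ℛ k (r.right i)).index, r.left i ⊗ₜ[k] ((ℛ k (r.right i)).left m ⊗ₜ[k]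
          Coalgebra.comul (R := k) ((ℛ k (r.right i)).right m)))
      = ∑ i ∈ r.index, ∑ m ∈ (ℛ k (r.right i)).index,
          (r.left i ⊗ₜ[k] (ℛ k (r.right i)).left m) * Coalgebra.comul (R := k) Λ *
            Coalgebra.comul (R := k) (antipode (R := k) ((ℛ k (r.right i)).right m)) := by
        refine Finset.sum_congr rfl fun i _ => ?_
        rw [map_sum]
        refine Finset.sum_congr rfl fun m _ => ?_
        -- Phi on a ⊗ (b ⊗ (comul w))
        set w := (ℛ k (r.right i)).right m
        have hw : Coalgebra.comul (R := k) w = ∑ n ∈ (ℛ k w).index,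
            (ℛ k w).left n ⊗ₜ[k] (ℛ k w).right n := ((ℛ k w).eq).symm
        rw [hw, TensorProduct.tmul_sum, TensorProduct.tmul_sum, map_sum]
        simp only [Phi_tmul]
        rw [antipode_comul w, hw, map_sum, map_sum]
        simp only [TensorProduct.map_tmul, TensorProduct.comm_tmul]
        rw [Finset.mul_sum]
    _ = ∑ i ∈ r.index, ∑ m ∈ (ℛ k (r.right i)).index,
          Coalgebra.counit (R := k) ((ℛ k (r.right i)).right m) •
            ((r.left i ⊗ₜ[k] (ℛ k (r.right i)).left m) * Coalgebra.comul (R := k) Λ) := by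
        refine Finset.sum_congr rfl fun i _ => Finset.sum_congr rfl fun m _ => ?_
        rw [mul_assoc, P2, mul_smul_comm]
    _ = ∑ i ∈ r.index, (r.left i ⊗ₜ[k] r.right i) * Coalgebra.comul (R := k) Λ := by
        refine Finset.sum_congr rfl fun i _ => ?_
        have : ∀ m ∈ (ℛ k (r.right i)).index,
            Coalgebra.counit (R := k) ((ℛ k (r.right i)).right m) •
              ((r.left i ⊗ₜ[k] (ℛ k (r.right i)).left m) * Coalgebra.comul (R := k) Λ) =
            ((r.left i ⊗ₜ[k] (Coalgebra.counit (R := k) ((ℛ k (r.right i)).right m) •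
              (ℛ k (r.right i)).left m)) * Coalgebra.comul (R := k) Λ) := by
          intro m _
          rw [TensorProduct.tmul_smul, smul_mul_assoc]
        rw [Finset.sum_congr rfl this, ← Finset.sum_mul, ← TensorProduct.tmul_sum]
        have hsc := sum_smul_counit (k := k) (LinearMap.id : H →ₗ[k] H) (r.right i)
          (ℛ k (r.right i))
        simp only [LinearMap.id_coe, id_eq] at hsc
        rw [hsc]
    _ = Coalgebra.counit (R := k) h • Coalgebra.comul (R := k) Λ := by
        rw [← Finset.sum_mul, r.eq, ← Bialgebra.comul_mul, hleft h, map_smul]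

end Main

/-- Let `H` be a finite-dimensional Hopf algebra with bijective antipode (inverse `Sinv`) and
left cointegral `Λ` with `S(Λ) = Λ`. Define `β : H → H ⊗ X` by
`β(h) = Λ₍₁₎ h ⊗ S⁻¹(Λ₍₂₎)`, where `X` is the dual coadjoint representation. Then `β` is an
`H`-module morphism; concretely, for all `h` and all Sweedler representations
`Δ³(h) = Σᵢ h₁ᵢ ⊗ h₂ᵢ ⊗ h₃ᵢ ⊗ h₄ᵢ` and `Δ(Λ) = Σⱼ Λ₁ⱼ ⊗ Λ₂ⱼ`:
`Σ_{i,j} h₁ᵢ Λ₁ⱼ S(h₄ᵢ) ⊗ S⁻¹(h₂ᵢ Λ₂ⱼ S(h₃ᵢ)) = ε(h) • Σⱼ Λ₁ⱼ ⊗ S⁻¹(Λ₂ⱼ)`. -/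
theorem stmt11 {k H : Type} [Field k] [Ring H] [HopfAlgebra k H] [FiniteDimensional k H]
    (Sinv : H →ₗ[k] H)
    (hS1 : ∀ x : H, Sinv (HopfAlgebra.antipode (R := k) x) = x)
    (hS2 : ∀ x : H, HopfAlgebra.antipode (R := k) (Sinv x) = x)
    (Λ : H)
    (hleft : ∀ x : H, x * Λ = Coalgebra.counit (R := k) x • Λ)
    (hSΛ : HopfAlgebra.antipode (R := k) Λ = Λ) :
    ∀ (h : H) (ι κ : Type) (t : Finset ι) (u : Finset κ)
      (h1 h2 h3 h4 : ι → H) (Λ1 Λ2 : κ → H),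
      comul3 (k := k) h = ∑ i ∈ t, h1 i ⊗ₜ[k] (h2 i ⊗ₜ[k] (h3 i ⊗ₜ[k] h4 i)) →
      Coalgebra.comul (R := k) Λ = ∑ j ∈ u, Λ1 j ⊗ₜ[k] Λ2 j →
      ∑ i ∈ t, ∑ j ∈ u,
          (h1 i * Λ1 j * HopfAlgebra.antipode (R := k) (h4 i)) ⊗ₜ[k]
            Sinv (h2 i * Λ2 j * HopfAlgebra.antipode (R := k) (h3 i))
        = Coalgebra.counit (R := k) h • ∑ j ∈ u, (Λ1 j) ⊗ₜ[k] Sinv (Λ2 j) := by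
  intro h ι κ t u h1 h2 h3 h4 Λ1 Λ2 hh hΛ
  have K := key_lemma Λ hleft hSΛ h
  rw [hh, hΛ, map_sum] at K
  simp only [Phi_tmul] at K
  have expand : ∀ i ∈ t, (h1 i ⊗ₜ[k] h2 i) * (∑ j ∈ u, Λ1 j ⊗ₜ[k] Λ2 j) *
      (HopfAlgebra.antipode (R := k) (h4 i) ⊗ₜ[k] HopfAlgebra.antipode (R := k) (h3 i)) =
      ∑ j ∈ u, (h1 i * Λ1 j * HopfAlgebra.antipode (R := k) (h4 i)) ⊗ₜ[k]
        (h2 i * Λ2 j * HopfAlgebra.antipode (R := k) (h3 i)) := by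
    intro i _
    rw [Finset.mul_sum, Finset.sum_mul]
    refine Finset.sum_congr rfl fun j _ => ?_
    rw [Algebra.TensorProduct.tmul_mul_tmul, Algebra.TensorProduct.tmul_mul_tmul]
  rw [Finset.sum_congr rfl expand] at K
  apply_fun (TensorProduct.map (LinearMap.id : H →ₗ[k] H) Sinv) at K
  simp only [map_sum, map_smul, TensorProduct.map_tmul, LinearMap.id_coe, id_eq] at K
  exact K
end
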